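/- Let S(I) be the rank-n spike associated with an independent set I of the hypercube graph H_n on the set of transversals. For X ⊆ E_n: if X includes no leg and is disjoint from some leg then r(X) = |X|; if X includes some leg and is disjoint from some other leg then r(X) = l(X) + 1; if X includes some leg and meets all legs then r(X) = n; if X includes no leg but meets all legs (so X is a transversal), then r(X) = n−1 if X ∈ I and r(X) = n otherwise. -/

import Mathlib

/-- The ground set of a rank-`n` spike: `n` disjoint legs, where the leg `i` consists of
`x_i = (i, true)` and `y_i = (i, false)`. -/
abbrev En (n : ℕ) := Fin n × Bool

/-- The `i`-th leg `L_i = {x_i, y_i}`. -/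
def leg (n : ℕ) (i : Fin n) : Set (En n) := {(i, true), (i, false)}

/-- A transversal: a set containing exactly one element of each leg. -/
def IsTransversal {n : ℕ} (X : Set (En n)) : Prop :=
  ∀ i : Fin n, ((i, true) ∈ X ∧ (i, false) ∉ X) ∨ ((i, true) ∉ X ∧ (i, false) ∈ X)

/-- The hypercube graph `H_n` on transversals: two transversals are adjacent iff they
differ in exactly one element (i.e. their symmetric difference has two elements). -/
def Hn (n : ℕ) : SimpleGraph (Set (En n)) where
  Adj X Y := IsTransversal X ∧ IsTransversal Y ∧ (symmDiff X Y).ncard = 2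
  symm := ⟨fun X Y ⟨h1, h2, h3⟩ => ⟨h2, h1, by rwa [symmDiff_comm]⟩⟩
  loopless := ⟨fun X ⟨_, _, h3⟩ => by
    simp [symmDiff_self, Set.bot_eq_empty] at h3⟩

/-- `I` is an independent set of the hypercube graph `H_n`. -/
def IndepInHn (n : ℕ) (I : Set (Set (En n))) : Prop :=
  (∀ X ∈ I, IsTransversal X) ∧ ∀ X ∈ I, ∀ Y ∈ I, ¬ (Hn n).Adj X Y

/-- `l(X)`: the number of legs which `X` meets. -/
noncomputable def legCount {n : ℕ} (X : Set (En n)) : ℕ :=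
  Set.ncard {i : Fin n | (i, true) ∈ X ∨ (i, false) ∈ X}

/-- The rank of a set `X` in a matroid `M`: the largest cardinality of an independent
subset of `X`. -/
noncomputable def mrank {α : Type*} (M : Matroid α) (X : Set α) : ℕ :=
  sSup {k | ∃ I, M.Indep I ∧ I ⊆ X ∧ I.ncard = k}

/-- The connectivity function of a matroid: μ_M(X) = r(X) + r(E−X) − r(E). -/
noncomputable def mconn {α : Type*} (M : Matroid α) (X : Set α) : ℤ :=
  (mrank M X : ℤ) + (mrank M (M.E \ X) : ℤ) - (mrank M M.E : ℤ)

/-- A circuit of a matroid: a minimal dependent subset of the ground set. -/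
def IsCircuit {α : Type*} (M : Matroid α) (C : Set α) : Prop :=
  C ⊆ M.E ∧ ¬ M.Indep C ∧ ∀ D ⊂ C, M.Indep D

/-- The circuits `{x_i, y_i, x_j, y_j}` for `i < j` (i.e. unions of two distinct legs). -/
def LegPairs (n : ℕ) : Set (Set (En n)) :=
  {C | ∃ i j : Fin n, i ≠ j ∧ C = leg n i ∪ leg n j}

/-- The circuit collection of the spike `S(I)`: unions of two legs, the transversals
in `I`, and all `(n+1)`-element sets containing none of the preceding circuits. -/
def SpikeCircuits (n : ℕ) (I : Set (Set (En n))) : Set (Set (En n)) :=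
  (LegPairs n ∪ I) ∪ {C | C.ncard = n + 1 ∧ ∀ D ∈ LegPairs n ∪ I, ¬ D ⊆ C}

section Aux

open Set

variable {n : ℕ}

lemma mem_leg_iff {i : Fin n} {e : En n} : e ∈ leg n i ↔ e = (i, true) ∨ e = (i, false) := by
  simp [leg]

lemma leg_subset_iff {i : Fin n} {X : Set (En n)} :
    leg n i ⊆ X ↔ (i, true) ∈ X ∧ (i, false) ∈ X := by
  constructor
  · intro h
    exact ⟨h (by simp [leg]), h (by simp [leg])⟩
  · rintro ⟨h1, h2⟩ e he
    rcases mem_leg_iff.mp he with rfl | rfl <;> assumption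

lemma disj_not_mem {j : Fin n} {X : Set (En n)} (hj : Disjoint (leg n j) X) (b : Bool) :
    (j, b) ∉ X := fun h =>
  Set.disjoint_left.mp hj (by cases b <;> simp [leg]) h

lemma meets_of_not_disjoint {j : Fin n} {X : Set (En n)} (h : ¬ Disjoint (leg n j) X) :
    (j, true) ∈ X ∨ (j, false) ∈ X := by
  obtain ⟨a, ha, haX⟩ := Set.not_disjoint_iff.mp h
  rcases mem_leg_iff.mp ha with rfl | rfl
  · exact Or.inl haX
  · exact Or.inr haX

/-- The set of indices of legs met by `X`. -/
def metSet (X : Set (En n)) : Set (Fin n) := {i : Fin n | (i, true) ∈ X ∨ (i, false) ∈ X}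

lemma legCount_def (X : Set (En n)) : legCount X = (metSet X).ncard := rfl

lemma metSet_eq_image (X : Set (En n)) : metSet X = Prod.fst '' X := by
  ext i
  constructor
  · rintro (h | h)
    exacts [⟨_, h, rfl⟩, ⟨_, h, rfl⟩]
  · rintro ⟨⟨j, b⟩, hm, rfl⟩
    cases b
    · exact Or.inr hm
    · exact Or.inl hm

lemma fst_injOn {X : Set (En n)} (h : ∀ i, ¬ leg n i ⊆ X) : Set.InjOn Prod.fst X := by
  rintro ⟨i, b⟩ hib ⟨i', b'⟩ hib' (h' : i = i')
  subst h'
  cases b <;> cases b'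
  · rfl
  · exact absurd (leg_subset_iff.mpr ⟨hib', hib⟩) (h i)
  · exact absurd (leg_subset_iff.mpr ⟨hib, hib'⟩) (h i)
  · rfl

lemma ncard_eq_legCount {X : Set (En n)} (h : ∀ i, ¬ leg n i ⊆ X) :
    X.ncard = legCount X := by
  rw [legCount_def, metSet_eq_image, Set.ncard_image_of_injOn (fst_injOn h)]

lemma legCount_le (X : Set (En n)) : legCount X ≤ n := by
  rw [legCount_def]
  calc (metSet X).ncard ≤ (Set.univ : Set (Fin n)).ncard :=
        Set.ncard_le_ncard (Set.subset_univ _) (Set.toFinite _)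
    _ = n := by simp [Set.ncard_univ]

lemma legCount_mono {X Y : Set (En n)} (h : X ⊆ Y) : legCount X ≤ legCount Y := by
  rw [legCount_def, legCount_def]
  refine Set.ncard_le_ncard ?_ (Set.toFinite _)
  rintro i (hi | hi)
  · exact Or.inl (h hi)
  · exact Or.inr (h hi)

lemma legCount_add_one_le {j : Fin n} {X : Set (En n)} (hj : Disjoint (leg n j) X) :
    legCount X + 1 ≤ n := by
  have hjn : j ∉ metSet X := by
    rintro (h | h)
    · exact disj_not_mem hj true h
    · exact disj_not_mem hj false h
  have : legCount X + 1 = (insert j (metSet X)).ncard := by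
    rw [legCount_def, Set.ncard_insert_of_notMem hjn (Set.toFinite _)]
  rw [this]
  calc (insert j (metSet X)).ncard ≤ (Set.univ : Set (Fin n)).ncard :=
        Set.ncard_le_ncard (Set.subset_univ _) (Set.toFinite _)
    _ = n := by simp [Set.ncard_univ]

lemma transversal_no_leg {T : Set (En n)} (h : IsTransversal T) (i : Fin n) :
    ¬ leg n i ⊆ T := by
  intro hsub
  rcases h i with ⟨_, h2⟩ | ⟨h1, _⟩
  · exact h2 (leg_subset_iff.mp hsub).2
  · exact h1 (leg_subset_iff.mp hsub).1

lemma transversal_metSet {T : Set (En n)} (h : IsTransversal T) : metSet T = Set.univ := by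
  ext i
  simp only [Set.mem_univ, iff_true]
  rcases h i with ⟨h1, _⟩ | ⟨_, h2⟩
  · exact Or.inl h1
  · exact Or.inr h2

lemma transversal_ncard {T : Set (En n)} (h : IsTransversal T) : T.ncard = n := by
  rw [ncard_eq_legCount (transversal_no_leg h), legCount_def, transversal_metSet h]
  simp [Set.ncard_univ]

lemma exists_circuit {M : Matroid (En n)} (hE : M.E = Set.univ) :
    ∀ k (J : Set (En n)), J.ncard = k → ¬ M.Indep J → ∃ C, C ⊆ J ∧ IsCircuit M C := by
  intro k
  induction k using Nat.strong_induction_on with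
  | _ k ih =>
    intro J hk hJ
    by_cases h : ∀ D, D ⊂ J → M.Indep D
    · exact ⟨J, subset_rfl, hE ▸ Set.subset_univ J, hJ, h⟩
    · push_neg at h
      obtain ⟨D, hDJ, hD⟩ := h
      have hlt : D.ncard < k := hk ▸ Set.ncard_lt_ncard hDJ (Set.toFinite J)
      obtain ⟨C, hCD, hC⟩ := ih D.ncard hlt D rfl hD
      exact ⟨C, hCD.trans hDJ.subset, hC⟩

lemma indep_iff_spike {I : Set (Set (En n))} {M : Matroid (En n)}
    (hE : M.E = Set.univ) (hC : ∀ C, IsCircuit M C ↔ C ∈ SpikeCircuits n I)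
    {J : Set (En n)} :
    M.Indep J ↔ ∀ C ∈ SpikeCircuits n I, ¬ C ⊆ J := by
  constructor
  · intro hJ C hCmem hsub
    exact ((hC C).mpr hCmem).2.1 (hJ.subset hsub)
  · intro h
    by_contra hJ
    obtain ⟨C, hCJ, hCc⟩ := exists_circuit hE J.ncard J rfl hJ
    exact h C ((hC C).mp hCc) hCJ

lemma indep_char {I : Set (Set (En n))} {M : Matroid (En n)}
    (hE : M.E = Set.univ) (hC : ∀ C, IsCircuit M C ↔ C ∈ SpikeCircuits n I)
    {J : Set (En n)} :
    M.Indep J ↔ J.ncard ≤ n ∧ (∀ i j : Fin n, i ≠ j → ¬ (leg n i ∪ leg n j ⊆ J)) ∧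
      (∀ D ∈ I, ¬ D ⊆ J) := by
  rw [indep_iff_spike hE hC]
  constructor
  · intro h
    refine ⟨?_, ?_, ?_⟩
    · by_contra hcard
      push_neg at hcard
      obtain ⟨C, hCJ, hCcard⟩ := Set.exists_subset_card_eq (show n + 1 ≤ J.ncard by omega)
      by_cases hD : ∃ D ∈ LegPairs n ∪ I, D ⊆ C
      · obtain ⟨D, hDm, hDC⟩ := hD
        exact h D (Or.inl hDm) (hDC.trans hCJ)
      · push_neg at hD
        exact h C (Or.inr ⟨hCcard, hD⟩) hCJ
    · intro i j hij hsub
      exact h _ (Or.inl (Or.inl ⟨i, j, hij, rfl⟩)) hsub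
    · intro D hD hsub
      exact h D (Or.inl (Or.inr hD)) hsub
  · rintro ⟨h1, h2, h3⟩ C (⟨⟨i, j, hij, rfl⟩ | hCI⟩ | ⟨hcard, -⟩) hsub
    · exact h2 i j hij hsub
    · exact h3 C hCI hsub
    · have := Set.ncard_le_ncard hsub (Set.toFinite J)
      omega

lemma mrank_eq_of {α : Type*} {M : Matroid α} {X J : Set α} (hJ : M.Indep J) (hJX : J ⊆ X)
    (hmax : ∀ J', M.Indep J' → J' ⊆ X → J'.ncard ≤ J.ncard) : mrank M X = J.ncard := by
  have hbdd : BddAbove {k | ∃ I, M.Indep I ∧ I ⊆ X ∧ I.ncard = k} := by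
    refine ⟨J.ncard, ?_⟩
    rintro k ⟨J', h1, h2, rfl⟩
    exact hmax J' h1 h2
  apply le_antisymm
  · refine csSup_le ⟨J.ncard, J, hJ, hJX, rfl⟩ ?_
    rintro k ⟨J', h1, h2, rfl⟩
    exact hmax J' h1 h2
  · exact le_csSup hbdd ⟨J, hJ, hJX, rfl⟩

open scoped Classical in
/-- A canonical choice of an element of `X` in leg `i` (when `X` meets leg `i`). -/
noncomputable def sel (X : Set (En n)) (i : Fin n) : En n :=
  if (i, true) ∈ X then (i, true) else (i, false)

lemma sel_fst (X : Set (En n)) (i : Fin n) : (sel X i).1 = i := by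
  unfold sel; split <;> rfl

lemma sel_mem {X : Set (En n)} {i : Fin n} (h : i ∈ metSet X) : sel X i ∈ X := by
  unfold sel; split
  · assumption
  · rcases h with h | h
    · tauto
    · exact h

/-- The selector set: one canonical element of `X` from each leg met by `X`. -/
noncomputable def selSet (X : Set (En n)) : Set (En n) := sel X '' metSet X

lemma selSet_subset (X : Set (En n)) : selSet X ⊆ X := by
  rintro _ ⟨i, hi, rfl⟩
  exact sel_mem hi

lemma mem_selSet {X : Set (En n)} {e : En n} (h : e ∈ selSet X) : e = sel X e.1 := by
  obtain ⟨i, _, rfl⟩ := h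
  rw [sel_fst]

lemma selSet_ncard (X : Set (En n)) : (selSet X).ncard = legCount X := by
  rw [selSet, legCount_def]
  apply Set.ncard_image_of_injOn
  intro i _ j _ h
  have := congrArg Prod.fst h
  rwa [sel_fst, sel_fst] at this

lemma sel_eq_of_true_mem {X : Set (En n)} {i : Fin n} (h : (i, true) ∈ X) :
    sel X i = (i, true) := by
  unfold sel; simp [h]

lemma leg_subset_insert_selSet {X S : Set (En n)} {i k : Fin n}
    (hS : S ⊆ selSet X) (h : leg n k ⊆ insert (i, false) S) : k = i := by
  have ht : (k, true) ∈ insert (i, false) S := h (by simp [leg])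
  have hf : (k, false) ∈ insert (i, false) S := h (by simp [leg])
  have htS : (k, true) ∈ S := by
    rcases ht with ht | ht
    · simp [Prod.ext_iff] at ht
    · exact ht
  rcases hf with hf | hf
  · exact (Prod.ext_iff.mp hf).1
  · have h1 := mem_selSet (hS htS)
    have h2 := mem_selSet (hS hf)
    exact absurd (h2.trans h1.symm) (by simp [Prod.ext_iff])

end Aux


section Aux2

open Set

variable {n : ℕ}

lemma indep_ncard_le {X J' : Set (En n)}
    (hpair : ∀ i j : Fin n, i ≠ j → ¬ (leg n i ∪ leg n j ⊆ J')) (hsub : J' ⊆ X) :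
    J'.ncard ≤ legCount X + 1 := by
  by_cases hfull : ∃ i0, leg n i0 ⊆ J'
  · obtain ⟨i0, h0⟩ := hfull
    set J'' := J' \ {((i0 : Fin n), false)} with hJ''
    have hnoleg : ∀ k, ¬ leg n k ⊆ J'' := by
      intro k hk
      have hkJ' : leg n k ⊆ J' := hk.trans Set.diff_subset
      have hki : k ≠ i0 := by
        intro h
        subst h
        exact (hk (by simp [leg])).2 rfl
      exact hpair k i0 hki (Set.union_subset hkJ' h0)
    have hcard : J''.ncard = legCount J'' := ncard_eq_legCount hnoleg
    have hle : legCount J'' ≤ legCount X := legCount_mono (Set.diff_subset.trans hsub)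
    have hplus : J''.ncard + 1 = J'.ncard :=
      Set.ncard_diff_singleton_add_one (h0 (by simp [leg])) (Set.toFinite _)
    omega
  · push_neg at hfull
    have := ncard_eq_legCount hfull
    have := legCount_mono hsub
    omega

end Aux2

/-- The rank function of the spike `S(I)`. -/
theorem stmt8 {n : ℕ} (hn : 2 < n) (I : Set (Set (En n))) (hI : IndepInHn n I)
    (M : Matroid (En n)) (hE : M.E = Set.univ)
    (hC : ∀ C, IsCircuit M C ↔ C ∈ SpikeCircuits n I) (X : Set (En n)) :
    ((¬ ∃ i, leg n i ⊆ X) → (∃ i, Disjoint (leg n i) X) → mrank M X = X.ncard) ∧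
    ((∃ i, leg n i ⊆ X) → (∃ j, Disjoint (leg n j) X) → mrank M X = legCount X + 1) ∧
    ((∃ i, leg n i ⊆ X) → (∀ i, ¬ Disjoint (leg n i) X) → mrank M X = n) ∧
    ((¬ ∃ i, leg n i ⊆ X) → (∀ i, ¬ Disjoint (leg n i) X) →
      (X ∈ I → mrank M X = n - 1) ∧ (X ∉ I → mrank M X = n)) := by
  have hIT := hI.1
  refine ⟨?_, ?_, ?_, ?_⟩
  · -- Case 1: no leg included, disjoint from some leg
    intro hno hdisj
    obtain ⟨j, hj⟩ := hdisj
    push_neg at hno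
    have hX : M.Indep X := by
      rw [indep_char hE hC]
      refine ⟨?_, ?_, ?_⟩
      · rw [ncard_eq_legCount hno]; exact legCount_le X
      · intro a b hab hsub
        exact hno a ((Set.subset_union_left).trans hsub)
      · intro D hD hsub
        rcases hIT D hD j with ⟨h1, _⟩ | ⟨_, h2⟩
        · exact disj_not_mem hj true (hsub h1)
        · exact disj_not_mem hj false (hsub h2)
    exact mrank_eq_of hX subset_rfl (fun J' _ h => Set.ncard_le_ncard h (Set.toFinite X))
  · -- Case 2: some leg included, disjoint from some leg
    rintro ⟨i, hi⟩ ⟨j, hj⟩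
    have hit : (i, true) ∈ X := (leg_subset_iff.mp hi).1
    have hif : (i, false) ∈ X := (leg_subset_iff.mp hi).2
    have hji : j ≠ i := fun h => disj_not_mem hj true (h ▸ hit)
    have hseli : sel X i = (i, true) := sel_eq_of_true_mem hit
    have himet : i ∈ metSet X := Or.inl hit
    have hitS : (i, true) ∈ selSet X := ⟨i, himet, hseli⟩
    have hifS : ((i, false) : En n) ∉ selSet X := by
      intro h
      have h2 := mem_selSet h
      rw [show ((i, false) : En n).1 = i from rfl, hseli] at h2
      simp [Prod.ext_iff] at h2
    set J : Set (En n) := insert (i, false) (selSet X) with hJdef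
    have hJX : J ⊆ X := Set.insert_subset hif (selSet_subset X)
    have hJcard : J.ncard = legCount X + 1 := by
      rw [hJdef, Set.ncard_insert_of_notMem hifS (Set.toFinite _), selSet_ncard]
    have hlegk : ∀ k : Fin n, leg n k ⊆ J → k = i :=
      fun k hk => leg_subset_insert_selSet subset_rfl hk
    have hJI : M.Indep J := by
      rw [indep_char hE hC]
      refine ⟨?_, ?_, ?_⟩
      · rw [hJcard]; exact legCount_add_one_le hj
      · intro a b hab hsub
        have ha := hlegk a ((Set.subset_union_left).trans hsub)
        have hb := hlegk b ((Set.subset_union_right).trans hsub)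
        exact hab (ha.trans hb.symm)
      · intro D hD hsub
        rcases hIT D hD j with ⟨h1, _⟩ | ⟨_, h2⟩
        · rcases Set.mem_insert_iff.mp (hsub h1) with h | h
          · exact hji (Prod.ext_iff.mp h).1
          · exact disj_not_mem hj true (selSet_subset X h)
        · rcases Set.mem_insert_iff.mp (hsub h2) with h | h
          · exact hji (Prod.ext_iff.mp h).1
          · exact disj_not_mem hj false (selSet_subset X h)
    have hres := mrank_eq_of hJI hJX (fun J' hJ' hsub => by
      rw [hJcard]
      exact indep_ncard_le (fun a b hab => ((indep_char hE hC).mp hJ').2.1 a b hab) hsub)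
    rw [hres, hJcard]
  · -- Case 3: some leg included, meets all legs
    rintro ⟨i, hi⟩ hall
    have hit : (i, true) ∈ X := (leg_subset_iff.mp hi).1
    have hif : (i, false) ∈ X := (leg_subset_iff.mp hi).2
    have hseli : sel X i = (i, true) := sel_eq_of_true_mem hit
    have hmet : metSet X = Set.univ := by
      ext k
      simp only [Set.mem_univ, iff_true]
      exact meets_of_not_disjoint (hall k)
    have hlc : legCount X = n := by
      rw [legCount_def, hmet]; simp [Set.ncard_univ]
    obtain ⟨j, hji⟩ : ∃ j : Fin n, j ≠ i := by
      have h1 : 1 < Fintype.card (Fin n) := by simp; omega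
      exact Fintype.exists_ne_of_one_lt_card h1 i
    have hjmet : j ∈ metSet X := by rw [hmet]; trivial
    have hjS : sel X j ∈ selSet X := ⟨j, hjmet, rfl⟩
    have hifS : ((i, false) : En n) ∉ selSet X := by
      intro h
      have h2 := mem_selSet h
      rw [show ((i, false) : En n).1 = i from rfl, hseli] at h2
      simp [Prod.ext_iff] at h2
    set J : Set (En n) := insert (i, false) (selSet X \ {sel X j}) with hJdef
    have hJX : J ⊆ X := Set.insert_subset hif (Set.diff_subset.trans (selSet_subset X))
    have hd : (selSet X \ {sel X j}).ncard + 1 = n := by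
      rw [Set.ncard_diff_singleton_add_one hjS (Set.toFinite _), selSet_ncard, hlc]
    have hJcard : J.ncard = n := by
      rw [hJdef, Set.ncard_insert_of_notMem (fun h => hifS h.1) (Set.toFinite _)]
      omega
    have hlegk : ∀ k : Fin n, leg n k ⊆ J → k = i :=
      fun k hk => leg_subset_insert_selSet Set.diff_subset hk
    have hJI : M.Indep J := by
      rw [indep_char hE hC]
      refine ⟨le_of_eq hJcard, ?_, ?_⟩
      · intro a b hab hsub
        have ha := hlegk a ((Set.subset_union_left).trans hsub)
        have hb := hlegk b ((Set.subset_union_right).trans hsub)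
        exact hab (ha.trans hb.symm)
      · intro D hD hsub
        have hDj : ∃ b : Bool, ((j, b) : En n) ∈ D := by
          rcases hIT D hD j with ⟨h1, _⟩ | ⟨_, h2⟩
          exacts [⟨true, h1⟩, ⟨false, h2⟩]
        obtain ⟨b, hb⟩ := hDj
        rcases Set.mem_insert_iff.mp (hsub hb) with h | h
        · exact hji (Prod.ext_iff.mp h).1
        · obtain ⟨hm, hne⟩ := h
          have := mem_selSet hm
          rw [show ((j, b) : En n).1 = j from rfl] at this
          exact hne this
    have hres := mrank_eq_of hJI hJX (fun J' hJ' _ => by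
      rw [hJcard]; exact ((indep_char hE hC).mp hJ').1)
    rw [hres, hJcard]
  · -- Case 4: no leg included, meets all legs (transversal)
    intro hno hall
    push_neg at hno
    have hT : IsTransversal X := by
      intro k
      rcases meets_of_not_disjoint (hall k) with h | h
      · exact Or.inl ⟨h, fun h2 => hno k (leg_subset_iff.mpr ⟨h, h2⟩)⟩
      · exact Or.inr ⟨fun h2 => hno k (leg_subset_iff.mpr ⟨h2, h⟩), h⟩
    have hXn : X.ncard = n := transversal_ncard hT
    constructor
    · intro hXI
      have hi0 : (⟨0, by omega⟩ : Fin n) ∈ metSet X := by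
        rcases hT ⟨0, by omega⟩ with ⟨h, _⟩ | ⟨_, h⟩
        exacts [Or.inl h, Or.inr h]
      have heX : sel X (⟨0, by omega⟩ : Fin n) ∈ X := sel_mem hi0
      set J : Set (En n) := X \ {sel X (⟨0, by omega⟩ : Fin n)} with hJdef
      have hJ1 : J.ncard + 1 = n := by
        rw [hJdef, Set.ncard_diff_singleton_add_one heX (Set.toFinite _), hXn]
      have hJI : M.Indep J := by
        rw [indep_char hE hC]
        refine ⟨by omega, ?_, ?_⟩
        · intro a b hab hsub
          exact hno a ((Set.subset_union_left).trans (hsub.trans Set.diff_subset))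
        · intro D hD hsub
          have hD1 : D.ncard = n := transversal_ncard (hIT D hD)
          have := Set.ncard_le_ncard hsub (Set.toFinite J)
          omega
      have hmax : ∀ J', M.Indep J' → J' ⊆ X → J'.ncard ≤ J.ncard := by
        intro J' hJ' hsub
        obtain ⟨h1, -, h3⟩ := (indep_char hE hC).mp hJ'
        by_contra hlt
        push_neg at hlt
        have heq : J' = X :=
          Set.eq_of_subset_of_ncard_le hsub (by omega) (Set.toFinite X)
        exact h3 X hXI heq.symm.subset
      rw [mrank_eq_of hJI Set.diff_subset hmax]
      omega
    · intro hXnI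
      have hXind : M.Indep X := by
        rw [indep_char hE hC]
        refine ⟨le_of_eq hXn, ?_, ?_⟩
        · intro a b hab hsub
          exact hno a ((Set.subset_union_left).trans hsub)
        · intro D hD hsub
          have hD1 : D.ncard = n := transversal_ncard (hIT D hD)
          have heq : D = X :=
            Set.eq_of_subset_of_ncard_le hsub (by omega) (Set.toFinite X)
          exact hXnI (heq ▸ hD)
      rw [mrank_eq_of hXind subset_rfl
        (fun J' _ h => Set.ncard_le_ncard h (Set.toFinite X)), hXn]
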